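/- Let p be an odd prime, Fp = ZMod p, let n ≥ 2, let 1 ≤ k ≤ n−1, and let s ∈ Fp be nonzero. Define d ∈ Fp^n by d_i = 1 for 1 ≤ i < k, d_k = s, and d_i = 0 for k < i ≤ n, and let D_s be the k×k diagonal matrix with diagonal entries d_1, …, d_k. For r ∈ Fp^n let τ(r) be the (n+1)×(n+1) matrix over Fp that agrees with the identity matrix except that its (i, n+1) entry is r_i for 1 ≤ i ≤ n and its (n, j) entry is d_j·r_j for 1 ≤ j ≤ n−1; let T = { τ(r) : r ∈ Fp^n }. Let P be an invertible n×n matrix over Fp, written in block form P = [[P₁₁, P₁₂, P₁₃], [P₂₁, P₂₂, P₂₃], [P₃₁, P₃₂, P₃₃]] with diagonal blocks of sizes k×k, (n−1−k)×(n−1−k) and 1×1, and let Q = [[P, 0], [0, 1]] be the corresponding block matrix in GL_{n+1}(Fp). Then Q·T·Q⁻¹ = T (as sets, conjugating each element of T by Q) if and only if P₁₂ = 0, P₁₃ = 0, P₂₃ = 0, and P₁₁ᵀ·D_s·P₁₁ = q·D_s where q is the scalar entry of the 1×1 block P₃₃. -/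

import Mathlib

open Matrix

/-- `d_i` (0-indexed): `d i = 1` for `i + 1 < k`, `d i = s` for `i + 1 = k`,
and `d i = 0` otherwise. -/
def dvec (p k : ℕ) (s : ZMod p) (i : ℕ) : ZMod p :=
  if i + 1 < k then 1 else if i + 1 = k then s else 0

/-- The `(n+1)×(n+1)` matrix `τ(r)`: it agrees with the identity except that its
`(i, n+1)` entry is `r_i` for `1 ≤ i ≤ n` and its `(n, j)` entry is `d_j·r_j`
for `1 ≤ j ≤ n-1` (stated here with 0-indexed rows and columns). -/
def tauM (p n k : ℕ) (s : ZMod p) (r : Fin n → ZMod p) :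
    Matrix (Fin (n + 1)) (Fin (n + 1)) (ZMod p) :=
  Matrix.of fun i j =>
    if i.val = j.val then 1
    else if j.val = n then (if h : i.val < n then r ⟨i.val, h⟩ else 0)
    else if i.val = n - 1 then
      dvec p k s j.val * (if h : j.val < n then r ⟨j.val, h⟩ else 0)
    else 0

/-- `T(n,k,s) = { τ(r) : r ∈ Fp^n }`. -/
def Tset (p n k : ℕ) (s : ZMod p) :
    Set (Matrix (Fin (n + 1)) (Fin (n + 1)) (ZMod p)) :=
  { M | ∃ r : Fin n → ZMod p, M = tauM p n k s r }

/-- The block matrix `Q = [[P, 0], [0, 1]]` in `M_{n+1}(Fp)`. -/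
def QofP (p n : ℕ) (P : Matrix (Fin n) (Fin n) (ZMod p)) :
    Matrix (Fin (n + 1)) (Fin (n + 1)) (ZMod p) :=
  Matrix.reindex finSumFinEquiv finSumFinEquiv
    (Matrix.fromBlocks P 0 0 (1 : Matrix (Fin 1) (Fin 1) (ZMod p)))


lemma QofP_apply (p n : ℕ) (P : Matrix (Fin n) (Fin n) (ZMod p)) (i j : Fin (n+1)) :
    QofP p n P i j = if h : i.val < n then
      (if h' : j.val < n then P ⟨i.val, h⟩ ⟨j.val, h'⟩ else 0)
    else (if j.val < n then 0 else 1) := by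
  have key : ∀ m : Fin (n+1), finSumFinEquiv.symm m =
      if h : m.val < n then Sum.inl ⟨m.val, h⟩ else Sum.inr 0 := by
    intro m
    by_cases h : m.val < n
    · rw [dif_pos h, Equiv.symm_apply_eq, finSumFinEquiv_apply_left]
      ext; rfl
    · rw [dif_neg h, Equiv.symm_apply_eq, finSumFinEquiv_apply_right]
      ext; simp; omega
  rw [QofP, Matrix.reindex_apply, Matrix.submatrix_apply, key i, key j]
  by_cases hi : i.val < n <;> by_cases hj : j.val < n <;>
    simp [hi, hj, Matrix.fromBlocks, Matrix.one_apply]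


lemma QofP_mul (p n : ℕ) (A B : Matrix (Fin n) (Fin n) (ZMod p)) :
    QofP p n A * QofP p n B = QofP p n (A * B) := by
  rw [QofP, QofP, QofP, Matrix.reindex_apply, Matrix.reindex_apply, Matrix.reindex_apply,
    Matrix.submatrix_mul_equiv, Matrix.fromBlocks_multiply]
  simp

lemma QofP_one (p n : ℕ) : QofP p n 1 = 1 := by
  rw [QofP, Matrix.fromBlocks_one, Matrix.reindex_apply]
  simp

lemma QofP_isUnit (p n : ℕ) (P : Matrix (Fin n) (Fin n) (ZMod p)) (hP : IsUnit P) :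
    IsUnit (QofP p n P) := by
  rcases isUnit_iff_exists.mp hP with ⟨B, h1, h2⟩
  exact isUnit_iff_exists.mpr ⟨QofP p n B, by rw [QofP_mul, h1, QofP_one],
    by rw [QofP_mul, h2, QofP_one]⟩


section
variable {p n k : ℕ} {s : ZMod p}

lemma dvec_last (hn : 2 ≤ n) (hk : k ≤ n - 1) : dvec p k s (n-1) = 0 := by
  rw [dvec, if_neg (by omega), if_neg (by omega)]

lemma mulQtau_apply (hn : 2 ≤ n) (hk : k ≤ n - 1)
    (P : Matrix (Fin n) (Fin n) (ZMod p)) (r : Fin n → ZMod p) (i j : Fin (n+1)) :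
    (QofP p n P * tauM p n k s r) i j =
      if hi : i.val < n then
        (if hj : j.val < n then
          P ⟨i.val, hi⟩ ⟨j.val, hj⟩ +
            P ⟨i.val, hi⟩ ⟨n-1, by omega⟩ * (dvec p k s j.val * r ⟨j.val, hj⟩)
        else P.mulVec r ⟨i.val, hi⟩)
      else (if j.val < n then 0 else 1) := by
  rw [Matrix.mul_apply, Fin.sum_univ_castSucc]
  have hQlast : QofP p n P i (Fin.last n) = if i.val < n then 0 else 1 := by
    rw [QofP_apply]
    by_cases h : i.val < n
    · rw [dif_pos h, dif_neg (by simp), if_pos h]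
    · rw [dif_neg h, if_neg (by simp), if_neg h]
  by_cases hi : i.val < n
  · rw [dif_pos hi]
    have hQ : ∀ m : Fin n, QofP p n P i m.castSucc = P ⟨i.val, hi⟩ m := by
      intro m
      rw [QofP_apply, dif_pos hi, dif_pos (by simp [m.isLt] : (m.castSucc).val < n)]
      exact congrArg _ (by ext; simp)
    by_cases hj : j.val < n
    · rw [dif_pos hj]
      have htau : ∀ m : Fin n, tauM p n k s r m.castSucc j =
          (if (m : ℕ) = (j : ℕ) then 1 else 0) +
          (if (m : ℕ) = n-1 then dvec p k s j.val * r ⟨j.val, hj⟩ else 0) := by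
        intro m
        have hd : dvec p k s (n-1) = 0 := dvec_last hn hk
        rw [tauM, Matrix.of_apply]
        simp only [Fin.coe_castSucc]
        rcases eq_or_ne (m : ℕ) (j : ℕ) with h1 | h1
        · rw [if_pos h1, if_pos h1]
          rcases eq_or_ne (m : ℕ) (n-1) with h2 | h2
          · have hd2 : dvec p k s (j : ℕ) = 0 := by
              rw [(by omega : (j : ℕ) = n - 1)]; exact hd
            rw [if_pos h2, hd2, zero_mul, add_zero]
          · rw [if_neg h2, add_zero]
        · rw [if_neg h1, if_neg (by omega : ¬(j : ℕ) = n)]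
          rcases eq_or_ne (m : ℕ) (n-1) with h2 | h2
          · rw [if_pos h2, dif_pos hj, if_neg h1, if_pos h2, zero_add]
          · rw [if_neg h2, if_neg h1, if_neg h2, zero_add]
      calc ∑ m : Fin n, QofP p n P i m.castSucc * tauM p n k s r m.castSucc j
            + QofP p n P i (Fin.last n) * tauM p n k s r (Fin.last n) j
          = ∑ m : Fin n, (P ⟨i.val, hi⟩ m * (if (m : ℕ) = (j : ℕ) then 1 else 0)
              + P ⟨i.val, hi⟩ m *
                (if (m : ℕ) = n-1 then dvec p k s j.val * r ⟨j.val, hj⟩ else 0)) := by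
            rw [hQlast, if_pos hi, zero_mul, add_zero]
            exact Finset.sum_congr rfl fun m _ => by rw [hQ m, htau m, mul_add]
        _ = P ⟨i.val, hi⟩ ⟨j.val, hj⟩ +
              P ⟨i.val, hi⟩ ⟨n-1, by omega⟩ * (dvec p k s j.val * r ⟨j.val, hj⟩) := by
            rw [Finset.sum_add_distrib]
            have e1 : ∀ m : Fin n, ((m : ℕ) = (j : ℕ)) = (m = (⟨j.val, hj⟩ : Fin n)) := by
              intro m; rw [eq_iff_iff, Fin.ext_iff]
            have e2 : ∀ m : Fin n, ((m : ℕ) = n - 1) = (m = (⟨n-1, by omega⟩ : Fin n)) := by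
              intro m; rw [eq_iff_iff, Fin.ext_iff]
            simp only [e1, e2, mul_ite, mul_one, mul_zero]
            rw [Finset.sum_ite_eq' Finset.univ, Finset.sum_ite_eq' Finset.univ,
              if_pos (Finset.mem_univ _), if_pos (Finset.mem_univ _)]
    · rw [dif_neg hj]
      have hjn : j.val = n := by omega
      have htau : ∀ m : Fin n, tauM p n k s r m.castSucc j = r m := by
        intro m
        rw [tauM, Matrix.of_apply]
        simp only [Fin.coe_castSucc]
        rw [if_neg (by have := m.isLt; omega), if_pos hjn, dif_pos m.isLt, Fin.eta]
      rw [hQlast, if_pos hi, zero_mul, add_zero]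
      rw [Matrix.mulVec, dotProduct]
      exact Finset.sum_congr rfl fun m _ => by rw [hQ m, htau m]
  · rw [dif_neg hi]
    have hin : i.val = n := by omega
    have hQ : ∀ m : Fin n, QofP p n P i m.castSucc = 0 := by
      intro m
      rw [QofP_apply, dif_neg hi, if_pos (by simp [m.isLt] : (m.castSucc).val < n)]
    have htaul : tauM p n k s r (Fin.last n) j = if j.val < n then 0 else 1 := by
      rw [tauM, Matrix.of_apply]
      simp only [Fin.val_last]
      by_cases hj : j.val < n
      · rw [if_pos hj, if_neg (by omega), if_neg (by omega), if_neg (by omega)]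
      · rw [if_neg hj, if_pos (by omega)]
    rw [hQlast, if_neg hi, one_mul, htaul]
    simp [hQ]

lemma tauQ_apply (hn : 2 ≤ n) (hk : k ≤ n - 1)
    (P : Matrix (Fin n) (Fin n) (ZMod p)) (r' : Fin n → ZMod p) (i j : Fin (n+1)) :
    (tauM p n k s r' * QofP p n P) i j =
      if hi : i.val < n then
        (if hj : j.val < n then
          P ⟨i.val, hi⟩ ⟨j.val, hj⟩ +
            (if i.val = n - 1 then
              ∑ m : Fin n, dvec p k s m.val * r' m * P m ⟨j.val, hj⟩ else 0)
        else r' ⟨i.val, hi⟩)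
      else (if j.val < n then 0 else 1) := by
  rw [Matrix.mul_apply, Fin.sum_univ_castSucc]
  have hQlast : QofP p n P (Fin.last n) j = if j.val < n then 0 else 1 := by
    rw [QofP_apply]
    by_cases h : j.val < n
    · rw [dif_neg (by simp), if_pos h]
    · rw [dif_neg (by simp), if_neg h]
  have hQ : ∀ m : Fin n, QofP p n P m.castSucc j =
      if hj : j.val < n then P m ⟨j.val, hj⟩ else 0 := by
    intro m
    rw [QofP_apply, dif_pos (by simp [m.isLt] : (m.castSucc).val < n)]
    by_cases hj : j.val < n
    · rw [dif_pos hj, dif_pos hj]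
      exact congrArg (fun x => P x _) (by ext; simp)
    · rw [dif_neg hj, dif_neg hj]
  have htaul : tauM p n k s r' i (Fin.last n) =
      if hi : i.val < n then r' ⟨i.val, hi⟩ else 1 := by
    rw [tauM, Matrix.of_apply]
    simp only [Fin.val_last]
    by_cases hi : i.val < n
    · rw [if_neg (by omega)]
      simp only [eq_self_iff_true, if_true, dif_pos hi]
    · rw [if_pos (by omega), dif_neg hi]
  have htau : ∀ m : Fin n, tauM p n k s r' i m.castSucc =
      (if (i : ℕ) = (m : ℕ) then 1 else 0) +
      (if (i : ℕ) = n - 1 then dvec p k s m.val * r' m else 0) := by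
    intro m
    have hd : dvec p k s (n-1) = 0 := dvec_last hn hk
    rw [tauM, Matrix.of_apply]
    simp only [Fin.coe_castSucc]
    rcases eq_or_ne (i : ℕ) (m : ℕ) with h1 | h1
    · rw [if_pos h1, if_pos h1]
      rcases eq_or_ne (i : ℕ) (n-1) with h2 | h2
      · have hd2 : dvec p k s (m : ℕ) = 0 := by
          rw [(by omega : (m : ℕ) = n - 1)]; exact hd
        rw [if_pos h2, hd2, zero_mul, add_zero]
      · rw [if_neg h2, add_zero]
    · rw [if_neg h1, if_neg (by have := m.isLt; omega : ¬(m : ℕ) = n)]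
      rcases eq_or_ne (i : ℕ) (n-1) with h2 | h2
      · rw [if_pos h2, dif_pos m.isLt, Fin.eta, if_neg h1, if_pos h2, zero_add]
      · rw [if_neg h2, if_neg h1, if_neg h2, zero_add]
  by_cases hi : i.val < n
  · rw [dif_pos hi]
    by_cases hj : j.val < n
    · rw [dif_pos hj]
      rw [htaul, dif_pos hi, hQlast, if_pos hj, mul_zero, add_zero]
      have step : ∀ m : Fin n, tauM p n k s r' i m.castSucc * QofP p n P m.castSucc j =
          (if m = (⟨i.val, hi⟩ : Fin n) then 1 else 0) * P m ⟨j.val, hj⟩ +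
          (if (i : ℕ) = n - 1 then dvec p k s m.val * r' m else 0) * P m ⟨j.val, hj⟩ := by
        intro m
        rw [htau m, hQ m, dif_pos hj, add_mul]
        have hmi : (m = (⟨i.val, hi⟩ : Fin n)) ↔ ((i : ℕ) = (m : ℕ)) := by
          rw [Fin.ext_iff]; exact eq_comm
        rw [if_congr hmi rfl rfl]
      rw [Finset.sum_congr rfl fun m _ => step m, Finset.sum_add_distrib]
      congr 1
      · simp [ite_mul, Finset.sum_ite_eq']
      · by_cases hc : (i : ℕ) = n - 1
        · rw [if_pos hc]
          exact Finset.sum_congr rfl fun m _ => by rw [if_pos hc]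
        · rw [if_neg hc]
          simp [if_neg hc]
    · rw [dif_neg hj, htaul, dif_pos hi, hQlast, if_neg hj, mul_one]
      have : ∀ m : Fin n, tauM p n k s r' i m.castSucc * QofP p n P m.castSucc j = 0 := by
        intro m; rw [hQ m, dif_neg hj, mul_zero]
      rw [Finset.sum_congr rfl fun m _ => this m, Finset.sum_const_zero, zero_add]
  · rw [dif_neg hi]
    rw [htaul, dif_neg hi, hQlast, one_mul]
    have : ∀ m : Fin n, tauM p n k s r' i m.castSucc * QofP p n P m.castSucc j = 0 := by
      intro m
      rw [htau m, if_neg (by have := m.isLt; omega), if_neg (by omega), add_zero, zero_mul]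
    rw [Finset.sum_congr rfl fun m _ => this m, Finset.sum_const_zero, zero_add]

lemma master (hn : 2 ≤ n) (hk : k ≤ n - 1)
    (P : Matrix (Fin n) (Fin n) (ZMod p)) (r r' : Fin n → ZMod p) :
    QofP p n P * tauM p n k s r = tauM p n k s r' * QofP p n P ↔
    ((∀ i : Fin n, P.mulVec r i = r' i) ∧
     ∀ i j : Fin n, P i ⟨n-1, Nat.sub_lt (by omega) Nat.one_pos⟩ * (dvec p k s j.val * r j) =
       (if i.val = n - 1 then ∑ m : Fin n, dvec p k s m.val * r' m * P m j else 0)) := by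
  rw [← Matrix.ext_iff]
  constructor
  · intro h
    constructor
    · intro i
      have h0 := h i.castSucc (Fin.last n)
      rw [mulQtau_apply hn hk, tauQ_apply hn hk,
        dif_pos (show (i.castSucc).val < n by simp [i.isLt]),
        dif_pos (show (i.castSucc).val < n by simp [i.isLt]),
        dif_neg (show ¬(Fin.last n).val < n by simp),
        dif_neg (show ¬(Fin.last n).val < n by simp)] at h0
      simpa using h0
    · intro i j
      have h0 := h i.castSucc j.castSucc
      rw [mulQtau_apply hn hk, tauQ_apply hn hk,
        dif_pos (show (i.castSucc).val < n by simp [i.isLt]),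
        dif_pos (show (i.castSucc).val < n by simp [i.isLt]),
        dif_pos (show (j.castSucc).val < n by simp [j.isLt]),
        dif_pos (show (j.castSucc).val < n by simp [j.isLt])] at h0
      have h1 := add_left_cancel h0
      simpa using h1
  · rintro ⟨h1, h2⟩ i j
    rw [mulQtau_apply hn hk, tauQ_apply hn hk]
    by_cases hi : i.val < n
    · rw [dif_pos hi, dif_pos hi]
      by_cases hj : j.val < n
      · rw [dif_pos hj, dif_pos hj]
        congr 1
        exact h2 ⟨i.val, hi⟩ ⟨j.val, hj⟩
      · rw [dif_neg hj, dif_neg hj]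
        exact h1 ⟨i.val, hi⟩
    · rw [dif_neg hi, dif_neg hi]

lemma sum_restrict {R : Type*} [AddCommMonoid R] {n k : ℕ} (hkn : k ≤ n) (f : Fin n → R)
    (hf : ∀ m : Fin n, k ≤ m.val → f m = 0) :
    ∑ m : Fin n, f m = ∑ m : Fin k, f (Fin.castLE hkn m) := by
  have hg : ∀ j : ℕ, (hj : j < n) → f ⟨j, hj⟩ = if h : j < n then f ⟨j, h⟩ else 0 := by
    intro j hj; rw [dif_pos hj]
  calc ∑ m : Fin n, f m
      = ∑ j ∈ Finset.range n, (if h : j < n then f ⟨j, h⟩ else 0) := by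
        rw [Finset.sum_range fun j => _]
        exact Finset.sum_congr rfl fun m _ => by rw [dif_pos m.isLt]
    _ = ∑ j ∈ Finset.range k, (if h : j < n then f ⟨j, h⟩ else 0) := by
        refine (Finset.sum_subset (Finset.range_subset_range.mpr hkn) ?_).symm
        intro x hx hnx
        rw [Finset.mem_range] at hx
        rw [Finset.mem_range, not_lt] at hnx
        rw [dif_pos hx]
        exact hf _ hnx
    _ = ∑ m : Fin k, f (Fin.castLE hkn m) := by
        rw [Finset.sum_range fun j => _]
        exact Finset.sum_congr rfl fun m _ => by rw [dif_pos (lt_of_lt_of_le m.isLt hkn)]; rfl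


lemma quad_iff {p n k : ℕ} (hkn : k ≤ n) (s : ZMod p)
    (P : Matrix (Fin n) (Fin n) (ZMod p)) (q : ZMod p)
    (hdz : ∀ m : ℕ, k ≤ m → dvec p k s m = 0) :
    ((Matrix.of fun a b : Fin k => P (Fin.castLE hkn a) (Fin.castLE hkn b))ᵀ *
        Matrix.diagonal (fun i : Fin k => dvec p k s i.val) *
        (Matrix.of fun a b : Fin k => P (Fin.castLE hkn a) (Fin.castLE hkn b)) =
      q • Matrix.diagonal (fun i : Fin k => dvec p k s i.val)) ↔
    (∀ a b : Fin n, a.val < k → b.val < k →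
      ∑ m : Fin n, dvec p k s m.val * P m b * P m a =
        q * (dvec p k s a.val * if a = b then 1 else 0)) := by
  rw [← Matrix.ext_iff]
  have entry : ∀ a' b' : Fin k,
      ((Matrix.of fun a b : Fin k => P (Fin.castLE hkn a) (Fin.castLE hkn b))ᵀ *
        Matrix.diagonal (fun i : Fin k => dvec p k s i.val) *
        (Matrix.of fun a b : Fin k => P (Fin.castLE hkn a) (Fin.castLE hkn b))) a' b' =
      ∑ m : Fin n, dvec p k s m.val * P m (Fin.castLE hkn b') * P m (Fin.castLE hkn a') := by
    intro a' b'
    rw [sum_restrict hkn _ (fun m hm => by rw [hdz m.val hm, zero_mul, zero_mul])]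
    simp only [Matrix.mul_apply, Matrix.transpose_apply, Matrix.of_apply,
      Matrix.diagonal_apply, mul_ite, mul_zero, ite_mul, zero_mul,
      Finset.sum_ite_eq', Finset.sum_ite_eq, Finset.mem_univ, if_true, Fin.coe_castLE]
    exact Finset.sum_congr rfl fun m _ => by ring
  have entry2 : ∀ a' b' : Fin k,
      (q • Matrix.diagonal (fun i : Fin k => dvec p k s i.val)) a' b' =
      q * (dvec p k s ((Fin.castLE hkn a') : ℕ) *
        if Fin.castLE hkn a' = Fin.castLE hkn b' then 1 else 0) := by
    intro a' b'
    simp only [Matrix.smul_apply, Matrix.diagonal_apply, smul_eq_mul, Fin.coe_castLE]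
    by_cases hab : a' = b'
    · rw [if_pos hab, if_pos (by rw [hab]), mul_one]
    · rw [if_neg hab, if_neg (fun hc => hab (Fin.castLE_injective hkn hc))]
      simp
  constructor
  · intro h a b hak hbk
    have h0 := h ⟨a.val, hak⟩ ⟨b.val, hbk⟩
    rw [entry, entry2] at h0
    have hca : Fin.castLE hkn (⟨a.val, hak⟩ : Fin k) = a := rfl
    have hcb : Fin.castLE hkn (⟨b.val, hbk⟩ : Fin k) = b := rfl
    rw [hca, hcb] at h0
    exact h0
  · intro h a' b'
    rw [entry, entry2]
    exact h (Fin.castLE hkn a') (Fin.castLE hkn b')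
      (by simpa using a'.isLt) (by simpa using b'.isLt)

end

/-- `Q·T·Q⁻¹ = T` iff `P₁₂ = 0`, `P₁₃ = 0`, `P₂₃ = 0`, and
`P₁₁ᵀ·D_s·P₁₁ = q·D_s` where `q = P₃₃`. -/
theorem stmt_7 (p : ℕ) (hp : p.Prime) (hodd : Odd p) (n k : ℕ)
    (hn : 2 ≤ n) (hk1 : 1 ≤ k) (hk2 : k ≤ n - 1)
    (s : ZMod p) (hs : s ≠ 0)
    (P : Matrix (Fin n) (Fin n) (ZMod p)) (hP : IsUnit P) :
    (fun M => QofP p n P * M * (QofP p n P)⁻¹) '' Tset p n k s = Tset p n k s ↔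
      ((∀ i j : Fin n, i.val < k → k ≤ j.val → j.val < n - 1 → P i j = 0) ∧
       (∀ i : Fin n, i.val < k → P i ⟨n - 1, by omega⟩ = 0) ∧
       (∀ i : Fin n, k ≤ i.val → i.val < n - 1 → P i ⟨n - 1, by omega⟩ = 0) ∧
       ((Matrix.of fun a b : Fin k =>
            P (Fin.castLE (by omega) a) (Fin.castLE (by omega) b))ᵀ *
          Matrix.diagonal (fun i : Fin k => dvec p k s i.val) *
          (Matrix.of fun a b : Fin k =>
            P (Fin.castLE (by omega) a) (Fin.castLE (by omega) b)) =
          P ⟨n - 1, by omega⟩ ⟨n - 1, by omega⟩ •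
            Matrix.diagonal (fun i : Fin k => dvec p k s i.val))) := by
  haveI : Fact p.Prime := ⟨hp⟩
  have hkn : k ≤ n := by omega
  have hQ : IsUnit (QofP p n P) := QofP_isUnit p n P hP
  have hQdet : IsUnit (QofP p n P).det := (Matrix.isUnit_iff_isUnit_det _).mp hQ
  have hQi1 : QofP p n P * (QofP p n P)⁻¹ = 1 := Matrix.mul_nonsing_inv _ hQdet
  have hQi2 : (QofP p n P)⁻¹ * QofP p n P = 1 := Matrix.nonsing_inv_mul _ hQdet
  have hPdet : IsUnit P.det := (Matrix.isUnit_iff_isUnit_det _).mp hP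
  have hPi1 : P * P⁻¹ = 1 := Matrix.mul_nonsing_inv _ hPdet
  have hdne : ∀ m : ℕ, m < k → dvec p k s m ≠ 0 := by
    intro m hm
    rw [dvec]
    split_ifs with hc1 hc2
    · exact one_ne_zero
    · exact hs
    · omega
  have hdz : ∀ m : ℕ, k ≤ m → dvec p k s m = 0 := by
    intro m hm
    rw [dvec, if_neg (by omega), if_neg (by omega)]
  have hmvs : ∀ (b : Fin n) (m : Fin n), P.mulVec (Pi.single b 1) m = P m b := by
    intro b m
    simp [Matrix.mulVec, dotProduct, Pi.single_apply, mul_ite, Finset.sum_ite_eq]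
  constructor
  · intro h
    have hE : ∀ (r : Fin n → ZMod p) (i j : Fin n),
        P i ⟨n-1, by omega⟩ * (dvec p k s j.val * r j) =
        (if i.val = n - 1 then
          ∑ m : Fin n, dvec p k s m.val * P.mulVec r m * P m j else 0) := by
      intro r
      have hmem : QofP p n P * tauM p n k s r * (QofP p n P)⁻¹ ∈ Tset p n k s := by
        rw [← h]
        exact Set.mem_image_of_mem _ ⟨r, rfl⟩
      obtain ⟨r', hr'⟩ := hmem
      have heq : QofP p n P * tauM p n k s r = tauM p n k s r' * QofP p n P := by
        calc QofP p n P * tauM p n k s r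
            = QofP p n P * tauM p n k s r * ((QofP p n P)⁻¹ * QofP p n P) := by
              rw [hQi2, mul_one]
          _ = (QofP p n P * tauM p n k s r * (QofP p n P)⁻¹) * QofP p n P :=
              (mul_assoc _ _ _).symm
          _ = tauM p n k s r' * QofP p n P := by rw [← hr']
      obtain ⟨hmv, hE'⟩ := (master hn hk2 P r r').mp heq
      have hr'' : r' = P.mulVec r := (funext hmv).symm
      rw [hr''] at hE'
      exact hE'
    -- columns k..n-1 other than last vanish in rows < n-1? derive hcol: P i (last col) = 0 for i < n-1
    have hcol : ∀ i : Fin n, i.val < n - 1 → P i ⟨n - 1, by omega⟩ = 0 := by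
      intro i hi
      have hb := hE (Pi.single ⟨k-1, by omega⟩ 1) i ⟨k-1, by omega⟩
      rw [if_neg (by omega), Pi.single_eq_same] at hb
      have hds : dvec p k s ((⟨k-1, by omega⟩ : Fin n) : ℕ) = s := by
        show dvec p k s (k-1) = s
        rw [dvec, if_neg (by omega), if_pos (by omega)]
      rw [hds, mul_one] at hb
      rcases mul_eq_zero.mp hb with h' | h'
      · exact h'
      · exact absurd h' hs
    have hfull : ∀ a b : Fin n,
        ∑ m : Fin n, dvec p k s m.val * P m b * P m a =
        P ⟨n-1, by omega⟩ ⟨n-1, by omega⟩ *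
          (dvec p k s a.val * if a = b then 1 else 0) := by
      intro a b
      have hb := hE (Pi.single b 1) ⟨n-1, by omega⟩ a
      rw [if_pos rfl, Pi.single_apply] at hb
      calc ∑ m : Fin n, dvec p k s m.val * P m b * P m a
          = ∑ m : Fin n, dvec p k s m.val * P.mulVec (Pi.single b 1) m * P m a :=
            Finset.sum_congr rfl fun m _ => by rw [hmvs b m]
        _ = _ := hb.symm
    refine ⟨?_, fun i hi => hcol i (by omega), fun i _ hi => hcol i hi, ?_⟩
    · -- P₁₂ = 0
      intro i j hik hkj hjn
      have hvan : ∀ a : Fin n, ∑ m : Fin n, dvec p k s m.val * P m j * P m a = 0 := by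
        intro a
        rw [hfull a j]
        by_cases hab : a = j
        · rw [if_pos hab, hab, hdz j.val hkj, zero_mul, mul_zero]
        · rw [if_neg hab, mul_zero, mul_zero]
      have hv : (fun m : Fin n => dvec p k s m.val * P m j) ᵥ* P = 0 := by
        funext a
        simpa [Matrix.vecMul, dotProduct] using hvan a
      have hu : (fun m : Fin n => dvec p k s m.val * P m j) = 0 := by
        calc (fun m : Fin n => dvec p k s m.val * P m j)
            = ((fun m : Fin n => dvec p k s m.val * P m j) ᵥ* P) ᵥ* P⁻¹ := by
              rw [Matrix.vecMul_vecMul, hPi1, Matrix.vecMul_one]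
          _ = 0 := by rw [hv, Matrix.zero_vecMul]
      have hzero := congrFun hu i
      simp only [Pi.zero_apply] at hzero
      rcases mul_eq_zero.mp hzero with h' | h'
      · exact absurd h' (hdne i.val hik)
      · exact h'
    · exact (quad_iff hkn s P _ hdz).mpr fun a b _ _ => hfull a b
  · rintro ⟨h1, h2, h3, h4⟩
    have hcol : ∀ i : Fin n, i.val < n - 1 → P i ⟨n - 1, by omega⟩ = 0 := by
      intro i hi
      by_cases hik : i.val < k
      · exact h2 i hik
      · exact h3 i (by omega) hi
    have hfull : ∀ a b : Fin n,
        ∑ m : Fin n, dvec p k s m.val * P m b * P m a =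
        P ⟨n-1, by omega⟩ ⟨n-1, by omega⟩ *
          (dvec p k s a.val * if a = b then 1 else 0) := by
      intro a b
      have hPz : ∀ (c : Fin n), k ≤ c.val → ∀ m : Fin n, m.val < k → P m c = 0 := by
        intro c hc m hm
        by_cases hcn : c.val < n - 1
        · exact h1 m c hm hc hcn
        · have hceq : c = ⟨n-1, by omega⟩ := Fin.ext (by
            show c.val = n - 1
            have := c.isLt
            omega)
          rw [hceq]
          exact h2 m hm
      by_cases hak : a.val < k
      · by_cases hbk : b.val < k
        · exact (quad_iff hkn s P _ hdz).mp h4 a b hak hbk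
        · have hl : ∑ m : Fin n, dvec p k s m.val * P m b * P m a = 0 := by
            refine Finset.sum_eq_zero fun m _ => ?_
            by_cases hmk : m.val < k
            · rw [hPz b (by omega) m hmk, mul_zero, zero_mul]
            · rw [hdz m.val (by omega), zero_mul, zero_mul]
          rw [hl]
          by_cases hab : a = b
          · rw [if_pos hab, hab, hdz b.val (by omega), zero_mul, mul_zero]
          · rw [if_neg hab, mul_zero, mul_zero]
      · have hl : ∑ m : Fin n, dvec p k s m.val * P m b * P m a = 0 := by
          refine Finset.sum_eq_zero fun m _ => ?_
          by_cases hmk : m.val < k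
          · rw [hPz a (by omega) m hmk, mul_zero]
          · rw [hdz m.val (by omega), zero_mul, zero_mul]
        rw [hl, hdz a.val (by omega), zero_mul, mul_zero]
    have hkey : ∀ r : Fin n → ZMod p,
        QofP p n P * tauM p n k s r = tauM p n k s (P.mulVec r) * QofP p n P := by
      intro r
      refine (master hn hk2 P r _).mpr ⟨fun i => rfl, ?_⟩
      intro i j
      by_cases hi : i.val = n - 1
      · rw [if_pos hi]
        have hieq : i = ⟨n-1, by omega⟩ := Fin.ext hi
        have expand : ∀ m : Fin n, dvec p k s m.val * P.mulVec r m * P m j =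
            ∑ b : Fin n, dvec p k s m.val * P m b * P m j * r b := by
          intro m
          rw [Matrix.mulVec, dotProduct, Finset.mul_sum, Finset.sum_mul]
          exact Finset.sum_congr rfl fun b _ => by ring
        rw [Finset.sum_congr rfl fun m _ => expand m, Finset.sum_comm]
        have step : ∀ b : Fin n, ∑ m : Fin n, dvec p k s m.val * P m b * P m j * r b =
            (P ⟨n-1, by omega⟩ ⟨n-1, by omega⟩ *
              (dvec p k s j.val * if j = b then 1 else 0)) * r b := by
          intro b
          rw [← Finset.sum_mul, hfull j b]
        rw [Finset.sum_congr rfl fun b _ => step b,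
          congrArg (fun x => P x (⟨n-1, by omega⟩ : Fin n)) hieq]
        simp [mul_ite, ite_mul, mul_zero, zero_mul, mul_one, Finset.sum_ite_eq,
          Finset.sum_ite_eq', mul_assoc]
      · rw [if_neg hi, hcol i (by omega), zero_mul]
    ext M
    constructor
    · rintro ⟨M', ⟨r, rfl⟩, rfl⟩
      refine ⟨P.mulVec r, ?_⟩
      show QofP p n P * tauM p n k s r * (QofP p n P)⁻¹ = tauM p n k s (P.mulVec r)
      rw [hkey r, mul_assoc, hQi1, mul_one]
    · rintro ⟨r', rfl⟩
      refine ⟨tauM p n k s (P⁻¹.mulVec r'), ⟨P⁻¹.mulVec r', rfl⟩, ?_⟩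
      have hmv : P.mulVec (P⁻¹.mulVec r') = r' := by
        rw [Matrix.mulVec_mulVec, hPi1, Matrix.one_mulVec]
      show QofP p n P * tauM p n k s (P⁻¹.mulVec r') * (QofP p n P)⁻¹ = tauM p n k s r'
      rw [hkey, hmv, mul_assoc, hQi1, mul_one]
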